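/- arXiv:2009.10118 — 2 statements merged into one kernel-verified Lean document; each statement's English description precedes it below -/
import Mathlib

section
/- For every n ≥ 2 and every j ∈ ℕ₀, the coefficient c_j^{(n)} of the polynomial (1+z)(1+2z)···(1+(n−1)z) satisfies c_j^{(n)} ≤ n!/2. -/
open Finset

/-- The polynomial `p_n(z) = (1+z)(1+2z)···(1+(n-1)z)`. -/
noncomputable def p (n : ℕ) : Polynomial ℚ :=
  ∏ k ∈ Finset.Icc 1 (n - 1), (Polynomial.C (k : ℚ) * Polynomial.X + 1)

/-- For `n ≥ 2`, every coefficient of `p_n` is at most `n!/2`. -/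
theorem coeff_p_le_half_factorial (n : ℕ) (hn : 2 ≤ n) (j : ℕ) :
    (p n).coeff j ≤ (Nat.factorial n : ℚ) / 2 := by
  induction n, hn using Nat.le_induction generalizing j with
  | base =>
    have hp : p 2 = Polynomial.C (1:ℚ) * Polynomial.X + 1 := by
      simp [p]
    rw [hp]
    rcases j with _ | _ | j <;>
      simp [Polynomial.coeff_add, Polynomial.coeff_C_mul, Polynomial.coeff_X,
        Nat.factorial, Polynomial.coeff_one]
  | succ n hn ih =>
    have hstep : p (n+1) = p n * (Polynomial.C (n:ℚ) * Polynomial.X + 1) := by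
      unfold p
      rw [Nat.add_sub_cancel]
      have h : n = (n-1) + 1 := by omega
      rw [h, Finset.prod_Icc_succ_top (by omega)]
      congr 2
    have hfac : ((Nat.factorial (n+1)) : ℚ) / 2
        = (n:ℚ) * (Nat.factorial n / 2) + Nat.factorial n / 2 := by
      rw [Nat.factorial_succ]
      push_cast
      ring
    rw [hstep, hfac]
    rcases j with _ | i
    · rw [Polynomial.mul_coeff_zero]
      have hg : (Polynomial.C (n:ℚ) * Polynomial.X + 1).coeff 0 = 1 := by simp
      rw [hg, mul_one]
      have := ih 0
      have h2 : (0:ℚ) ≤ (n:ℚ) * (Nat.factorial n / 2) := by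
        positivity
      linarith
    · have hexp : (p n * (Polynomial.C (n:ℚ) * Polynomial.X + 1)).coeff (i+1)
          = (n:ℚ) * (p n).coeff i + (p n).coeff (i+1) := by
        rw [mul_add, mul_one, Polynomial.coeff_add]
        congr 1
        have : p n * (Polynomial.C (n:ℚ) * Polynomial.X)
            = (Polynomial.C (n:ℚ) * p n) * Polynomial.X := by ring
        rw [this, Polynomial.coeff_mul_X, Polynomial.coeff_C_mul]
      rw [hexp]
      have h1 := ih i
      have h2 := ih (i+1)
      have hn0 : (0:ℚ) ≤ (n:ℚ) := by positivity
      nlinarith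
end

section
/- Let ξ_j^{(n)} be the coefficient of z^j in (1+2z)(1+3z)···(1+(n−1)z), and let h(n) := Σ_{j=3}^{n} 1/j. Then for every n ≥ 3, Σ_{j=0}^{n−3} ξ_j^{(n)} · (n−2−j) = (n!/2) · h(n). -/
open Finset Polynomial

noncomputable def q (n : ℕ) : Polynomial ℚ :=
  ∏ k ∈ Finset.Icc 2 (n - 1), (Polynomial.C (k : ℚ) * Polynomial.X + 1)

noncomputable def h (n : ℕ) : ℚ := ∑ j ∈ Finset.Icc 3 n, (1 : ℚ) / j

lemma prod_eq_fact (n : ℕ) (hn : 2 ≤ n) :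
    ∏ k ∈ Finset.Icc 2 (n - 1), ((k : ℚ) + 1) = (Nat.factorial n : ℚ) / 2 := by
  induction n, hn using Nat.le_induction with
  | base => simp [Nat.factorial]
  | succ m hm ih =>
      rw [show m + 1 - 1 = (m - 1) + 1 by omega, Finset.prod_Icc_succ_top (by omega), ih,
        show m - 1 + 1 = m by omega, Nat.factorial_succ]
      push_cast
      ring

lemma derivative_finset_prod (s : Finset ℕ) (f : ℕ → Polynomial ℚ) :
    Polynomial.derivative (∏ i ∈ s, f i)
      = ∑ i ∈ s, (∏ j ∈ s.erase i, f j) * Polynomial.derivative (f i) := by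
  simp only [Finset.prod, Finset.sum, Polynomial.derivative_prod, Finset.erase_val]

/-- For `n ≥ 3`, `Σ_{j=0}^{n-3} ξ_j^{(n)}·(n-2-j) = (n!/2)·h(n)`. -/
theorem weighted_sum_coeff_q (n : ℕ) (hn : 3 ≤ n) :
    ∑ j ∈ Finset.range (n - 2), (q n).coeff j * ((n : ℚ) - 2 - j) =
      ((Nat.factorial n : ℚ) / 2) * h n := by
  obtain ⟨m, rfl⟩ : ∃ m, n = m + 3 := ⟨n - 3, by omega⟩
  set p := q (m + 3) with hp
  set F : ℚ := (Nat.factorial (m + 3) : ℚ) / 2 with hF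
  have hm1 : m + 3 - 2 = m + 1 := by omega
  have hm2 : m + 3 - 1 = m + 2 := by omega
  have hfact : ∏ k ∈ Finset.Icc 2 (m + 2), ((k : ℚ) + 1) = F := by
    have := prod_eq_fact (m + 3) (by omega); rwa [hm2] at this
  have hdeg : p.natDegree ≤ m + 1 := by
    rw [hp, q, hm2]
    refine le_trans (Polynomial.natDegree_prod_le _ _) ?_
    calc ∑ k ∈ Icc 2 (m + 2), (Polynomial.C (k:ℚ) * Polynomial.X + 1).natDegree
        ≤ ∑ _k ∈ Icc 2 (m + 2), 1 := by
          refine Finset.sum_le_sum fun k _ => ?_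
          simpa using Polynomial.natDegree_linear_le (a := (k:ℚ)) (b := (1:ℚ))
      _ = m + 1 := by rw [Finset.sum_const, Nat.card_Icc, smul_eq_mul, mul_one]; omega
  have heval : p.eval 1 = ∑ j ∈ Finset.range (m + 2), p.coeff j := by
    rw [Polynomial.eval_eq_sum_range' (by omega : p.natDegree < m + 2)]
    simp
  have hevalP : p.eval 1 = ∏ k ∈ Finset.Icc 2 (m + 2), ((k : ℚ) + 1) := by
    simp [hp, q, hm2, Polynomial.eval_prod]
  have hdd : (Polynomial.derivative p).natDegree < m + 1 := by
    have := Polynomial.natDegree_derivative_le p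
    omega
  have hder : (Polynomial.derivative p).eval 1
      = ∑ j ∈ Finset.range (m + 1), p.coeff (j + 1) * ((j : ℚ) + 1) := by
    rw [Polynomial.eval_eq_sum_range' hdd]
    simp [Polynomial.coeff_derivative]
  have hderP : (Polynomial.derivative p).eval 1
      = ∑ k ∈ Finset.Icc 2 (m + 2),
          (∏ i ∈ (Finset.Icc 2 (m + 2)).erase k, ((i : ℚ) + 1)) * k := by
    rw [hp, q, hm2, derivative_finset_prod]
    simp [Polynomial.eval_finset_sum, Polynomial.eval_prod]
  have key : ∑ j ∈ Finset.range (m + 3 - 2), p.coeff j * (((m + 3 : ℕ) : ℚ) - 2 - j)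
      = ((m : ℚ) + 1) * p.eval 1 - (Polynomial.derivative p).eval 1 := by
    rw [hm1, heval, hder]
    have step1 : ∑ j ∈ Finset.range (m + 1), p.coeff j * (((m + 3 : ℕ) : ℚ) - 2 - j)
        = ∑ j ∈ Finset.range (m + 2), p.coeff j * (((m : ℚ) + 1) - j) := by
      rw [show m + 2 = (m + 1) + 1 from rfl,
        Finset.sum_range_succ (fun j => p.coeff j * (((m : ℚ) + 1) - j)) (m + 1)]
      have hz : p.coeff (m + 1) * (((m : ℚ) + 1) - (((m + 1 : ℕ)) : ℚ)) = 0 := by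
        push_cast; ring
      rw [hz, add_zero]
      exact Finset.sum_congr rfl fun j _ => by push_cast; ring
    rw [step1]
    have step2 : ∑ j ∈ Finset.range (m + 2), p.coeff j * (((m : ℚ) + 1) - j)
        = ((m : ℚ) + 1) * ∑ j ∈ Finset.range (m + 2), p.coeff j
          - ∑ j ∈ Finset.range (m + 2), p.coeff j * j := by
      rw [Finset.mul_sum, ← Finset.sum_sub_distrib]
      exact Finset.sum_congr rfl fun j _ => by ring
    rw [step2]
    congr 1
    rw [Finset.sum_range_succ' (fun j => p.coeff j * (j : ℚ)) (m + 1)]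
    push_cast
    simp [mul_comm]
  rw [key, hevalP, hfact, hderP]
  have hQ : ∀ k ∈ Finset.Icc 2 (m + 2),
      (∏ i ∈ (Finset.Icc 2 (m + 2)).erase k, ((i : ℚ) + 1)) = F * (1 / ((k : ℚ) + 1)) := by
    intro k hk
    have hk1 : ((k : ℚ) + 1) ≠ 0 := by positivity
    rw [mul_one_div, eq_div_iff hk1, Finset.prod_erase_mul _ _ hk]
    exact hfact
  have hcount : ((m : ℚ) + 1) * F = ∑ _k ∈ Finset.Icc 2 (m + 2), F := by
    rw [Finset.sum_const, Nat.card_Icc, show m + 2 + 1 - 2 = m + 1 from by omega,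
      nsmul_eq_mul]
    push_cast; ring
  rw [hcount, ← Finset.sum_sub_distrib]
  have hterms : ∑ k ∈ Finset.Icc 2 (m + 2),
        (F - (∏ i ∈ (Finset.Icc 2 (m + 2)).erase k, ((i : ℚ) + 1)) * k)
      = ∑ k ∈ Finset.Icc 2 (m + 2), F * (1 / ((k : ℚ) + 1)) := by
    refine Finset.sum_congr rfl fun k hk => ?_
    rw [hQ k hk]
    have hk1 : ((k : ℚ) + 1) ≠ 0 := by positivity
    field_simp
    ring
  rw [hterms, h, Finset.mul_sum]
  refine Finset.sum_nbij' (i := fun k => k + 1) (j := fun k => k - 1) ?_ ?_ ?_ ?_ ?_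
  · intro a ha; simp only [Finset.mem_Icc] at ha ⊢; omega
  · intro a ha; simp only [Finset.mem_Icc] at ha ⊢; omega
  · intro a ha; simp only [Finset.mem_Icc] at ha; show a + 1 - 1 = a; omega
  · intro a ha; simp only [Finset.mem_Icc] at ha; show a - 1 + 1 = a; omega
  · intro a ha; push_cast; ring
end
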